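/- arXiv:2603.04634 — 7 statements merged into one kernel-verified Lean document; each statement's English description precedes it below -/
import Mathlib

section
/- For every a ∈ A and all m, n ∈ ℤ, the Fourier projections are mutually orthogonal idempotents: P_m(P_n(a)) = P_n(a) if m = n, and P_m(P_n(a)) = 0 if m ≠ n. -/
open MeasureTheory intervalIntegral

/-- The `m`-th Fourier projection of `a` with respect to the one-parameter group `α`:
`P_m(a) := (1/(2π)) ∫_0^{2π} e^{-imt} • α(t)(a) dt` (a Bochner integral). -/
noncomputable def fourierProj {A : Type*} [NormedAddCommGroup A] [NormedSpace ℂ A]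
    (α : ℝ → (A →L[ℂ] A)) (m : ℤ) (a : A) : A :=
  (2 * (Real.pi : ℂ))⁻¹ •
    ∫ t in (0 : ℝ)..(2 * Real.pi), Complex.exp (-(m : ℂ) * (t : ℂ) * Complex.I) • (α t) a

theorem alpha_fourierProj
    {A : Type*} [NormedAddCommGroup A] [NormedSpace ℂ A] [CompleteSpace A]
    (α : ℝ → (A →L[ℂ] A))
    (hadd : ∀ s t : ℝ, α (s + t) = (α s).comp (α t))
    (hper : ∀ t : ℝ, α (t + 2 * Real.pi) = α t)
    (hcont : ∀ a : A, Continuous fun t : ℝ => (α t) a)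
    (a : A) (n : ℤ) (t : ℝ) :
    (α t) (fourierProj α n a) =
      Complex.exp ((n : ℂ) * (t : ℂ) * Complex.I) • fourierProj α n a := by
  have hint : IntervalIntegrable
      (fun s : ℝ => Complex.exp (-(n : ℂ) * (s : ℂ) * Complex.I) • (α s) a)
      volume 0 (2 * Real.pi) := by
    apply Continuous.intervalIntegrable
    exact ((Complex.continuous_exp.comp (by continuity)).smul (hcont a))
  have hper' : Function.Periodic
      (fun s : ℝ => Complex.exp (-(n : ℂ) * (s : ℂ) * Complex.I) • (α s) a)
      (2 * Real.pi) := by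
    intro s
    simp only [hper s]
    congr 1
    push_cast
    rw [mul_add, add_mul, Complex.exp_add]
    have : Complex.exp (-(n : ℂ) * (2 * Real.pi) * Complex.I) = 1 := by
      have : (-(n : ℂ)) * (2 * Real.pi) * Complex.I = (-n : ℤ) * (2 * Real.pi * Complex.I) := by
        push_cast; ring
      rw [this, Complex.exp_int_mul_two_pi_mul_I]
    rw [this, mul_one]
  unfold fourierProj
  rw [_root_.map_smul, ← (α t).intervalIntegral_comp_comm hint]
  simp only [_root_.map_smul]
  have hcomp : ∀ s : ℝ, (α t) ((α s) a) = α (t + s) a := by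
    intro s; rw [hadd]; rfl
  simp only [hcomp]
  have key : (∫ s in (0:ℝ)..(2 * Real.pi),
        Complex.exp (-(n : ℂ) * (s : ℂ) * Complex.I) • α (t + s) a)
      = Complex.exp ((n : ℂ) * (t : ℂ) * Complex.I) •
        ∫ s in (0:ℝ)..(2 * Real.pi),
          Complex.exp (-(n : ℂ) * (s : ℂ) * Complex.I) • α s a := by
    have h1 : ∀ s : ℝ, Complex.exp (-(n : ℂ) * (s : ℂ) * Complex.I) • α (t + s) a
        = Complex.exp ((n : ℂ) * (t : ℂ) * Complex.I) •
          (Complex.exp (-(n : ℂ) * ((t + s : ℝ) : ℂ) * Complex.I) • α (t + s) a) := by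
      intro s
      rw [smul_smul, ← Complex.exp_add]
      congr 2
      push_cast; ring
    simp only [h1]
    rw [intervalIntegral.integral_smul]
    congr 1
    rw [intervalIntegral.integral_comp_add_left
      (fun u : ℝ => Complex.exp (-(n : ℂ) * (u : ℂ) * Complex.I) • α u a) t]
    have := hper'.intervalIntegral_add_eq t 0
    simpa [add_comm, zero_add] using this
  rw [key, smul_comm]

/-- For a strongly continuous `2π`-periodic one-parameter group `α` of operators on a
complex Banach space `A`, the Fourier projections are mutually orthogonal idempotents:
`P_m(P_n(a)) = P_n(a)` if `m = n` and `P_m(P_n(a)) = 0` otherwise. -/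
theorem fourierProj_orthogonal_idempotent
    {A : Type*} [NormedAddCommGroup A] [NormedSpace ℂ A] [CompleteSpace A]
    (α : ℝ → (A →L[ℂ] A))
    (h0 : α 0 = ContinuousLinearMap.id ℂ A)
    (hadd : ∀ s t : ℝ, α (s + t) = (α s).comp (α t))
    (hper : ∀ t : ℝ, α (t + 2 * Real.pi) = α t)
    (hcont : ∀ a : A, Continuous fun t : ℝ => (α t) a) :
    ∀ (a : A) (m n : ℤ),
      fourierProj α m (fourierProj α n a) = if m = n then fourierProj α n a else 0 := by
  intro a m n
  conv_lhs => rw [fourierProj]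
  have heig := alpha_fourierProj α hadd hper hcont a n
  simp only [heig, smul_smul, ← Complex.exp_add]
  have h2 : ∀ t : ℝ, (-(m : ℂ) * (t : ℂ) * Complex.I + (n : ℂ) * (t : ℂ) * Complex.I)
      = ((n - m : ℤ) : ℂ) * Complex.I * (t : ℂ) := by
    intro t; push_cast; ring
  simp only [h2]
  rw [intervalIntegral.integral_smul_const, smul_smul]
  by_cases hmn : m = n
  · subst hmn
    simp only [sub_self, Int.cast_zero, zero_mul, Complex.exp_zero]
    rw [intervalIntegral.integral_const]
    simp only [sub_zero, smul_eq_mul, if_true]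
    rw [Complex.real_smul, mul_one, Complex.ofReal_mul, Complex.ofReal_ofNat,
      inv_mul_cancel₀ (by
        simp [Real.pi_ne_zero, Complex.ofReal_ne_zero] : (2 * (Real.pi : ℂ)) ≠ 0)]
    simp
  · simp only [if_neg hmn]
    have hc : ((n - m : ℤ) : ℂ) * Complex.I ≠ 0 := by
      simp [Complex.I_ne_zero, sub_eq_zero, Ne.symm hmn]
    rw [integral_exp_mul_complex hc]
    have : Complex.exp (((n - m : ℤ) : ℂ) * Complex.I * ((2 * Real.pi : ℝ) : ℂ)) = 1 := by
      have h3 : ((n - m : ℤ) : ℂ) * Complex.I * ((2 * Real.pi : ℝ) : ℂ)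
          = (n - m : ℤ) * (2 * Real.pi * Complex.I) := by push_cast; ring
      rw [h3, Complex.exp_int_mul_two_pi_mul_I]
    have h0' : Complex.exp (((n - m : ℤ) : ℂ) * Complex.I * ((0 : ℝ) : ℂ)) = 1 := by simp
    rw [this, h0', sub_self, zero_div, mul_zero, zero_smul]
end

section
/- Let r > 0 and let f : ℂ → A be holomorphic on the strip S_r and 2π-periodic on S_r. Then for every y ∈ ℝ with |y| < r and every m ∈ ℤ, the integration contour can be shifted: ∫_0^{2π} e^{-imt} • f(t) dt = e^{my} • ∫_0^{2π} e^{-imt} • f(t + iy) dt. -/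
open MeasureTheory intervalIntegral
open scoped Interval

/-- **Contour shifting for Fourier coefficients of periodic holomorphic functions.**
Let `A` be a complex Banach space, `r > 0`, and let `f : ℂ → A` be holomorphic on the
strip `S_r = {z : |Im z| < r}` and `2π`-periodic on `S_r`.  Then for every real `y` with
`|y| < r` and every `m ∈ ℤ`,
`∫_0^{2π} e^{-imt} • f(t) dt = e^{my} • ∫_0^{2π} e^{-imt} • f(t + iy) dt`. -/
theorem integral_exp_smul_shift_contour
    {A : Type*} [NormedAddCommGroup A] [NormedSpace ℂ A] [CompleteSpace A]
    (r : ℝ) (hr : 0 < r) (f : ℂ → A)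
    (hf : DifferentiableOn ℂ f {z : ℂ | |z.im| < r})
    (hper : ∀ z : ℂ, |z.im| < r → f (z + 2 * Real.pi) = f z)
    (y : ℝ) (hy : |y| < r) (m : ℤ) :
    ∫ t in (0 : ℝ)..(2 * Real.pi),
        Complex.exp (-(m : ℂ) * (t : ℂ) * Complex.I) • f (t : ℂ)
      = Complex.exp ((m : ℂ) * (y : ℂ)) •
          ∫ t in (0 : ℝ)..(2 * Real.pi),
            Complex.exp (-(m : ℂ) * (t : ℂ) * Complex.I) • f ((t : ℂ) + (y : ℂ) * Complex.I) := by
  set g : ℂ → A := fun z => Complex.exp (-(m : ℂ) * z * Complex.I) • f z with hg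
  have habs : ∀ s : ℝ, s ∈ Set.uIcc (0 : ℝ) y → |s| < r := by
    intro s hs
    have : |s| ≤ |y| := by
      rw [Set.uIcc_eq_union] at hs
      rcases hs with h | h <;> rw [abs_le] <;> constructor <;>
        nlinarith [neg_abs_le y, le_abs_self y, h.1, h.2]
    exact lt_of_le_of_lt this hy
  -- the rectangle is inside the strip
  have hsub : ([[(0 : ℂ).re, ((2 * Real.pi : ℝ) + y * Complex.I : ℂ).re]] ×ℂ
      [[(0 : ℂ).im, ((2 * Real.pi : ℝ) + y * Complex.I : ℂ).im]]) ⊆ {z : ℂ | |z.im| < r} := by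
    intro z hz
    have h2 := hz.2
    simp only [Complex.mem_reProdIm, Complex.add_im, Complex.ofReal_im, Complex.mul_im,
      Complex.ofReal_re, Complex.I_im, Complex.I_re, Complex.zero_im, mul_zero, mul_one, zero_add,
      zero_add, Complex.zero_im] at h2
    exact habs z.im (by simpa using h2)
  have hgd : DifferentiableOn ℂ g ([[(0 : ℂ).re, ((2 * Real.pi : ℝ) + y * Complex.I : ℂ).re]] ×ℂ
      [[(0 : ℂ).im, ((2 * Real.pi : ℝ) + y * Complex.I : ℂ).im]]) := by
    apply DifferentiableOn.smul
    · exact (Complex.differentiable_exp.comp (by fun_prop)).differentiableOn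
    · exact hf.mono hsub
  have key := Complex.integral_boundary_rect_eq_zero_of_differentiableOn g 0
      ((2 * Real.pi : ℝ) + y * Complex.I) hgd
  have hre : ((2 * Real.pi : ℝ) + y * Complex.I : ℂ).re = 2 * Real.pi := by simp
  have him : ((2 * Real.pi : ℝ) + y * Complex.I : ℂ).im = y := by simp
  rw [hre, him] at key
  simp only [Complex.zero_re, Complex.zero_im, Complex.ofReal_zero, zero_mul, add_zero, zero_add] at key
  -- vertical sides cancel: g (2π + s I) = g (s I)
  have hvert : (∫ s in (0:ℝ)..y, g ((2 * Real.pi : ℝ) + s * Complex.I))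
      = ∫ s in (0:ℝ)..y, g ((s : ℝ) * Complex.I) := by
    apply intervalIntegral.integral_congr
    intro s hs
    have hsabs := habs s hs
    have hf' : f ((2 * Real.pi : ℝ) + s * Complex.I) = f ((s : ℝ) * Complex.I) := by
      have := hper ((s : ℝ) * Complex.I) (by simpa using hsabs)
      rw [← this]; push_cast; ring_nf
    simp only [hg, hf']
    congr 1
    rw [show (-(m : ℂ) * ((2 * Real.pi : ℝ) + s * Complex.I) * Complex.I)
        = (-(m : ℂ) * ((s : ℝ) * Complex.I) * Complex.I)
          + (-m : ℤ) * (2 * Real.pi * Complex.I) by push_cast; ring,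
      Complex.exp_add, Complex.exp_int_mul_two_pi_mul_I, mul_one]
  rw [hvert, add_sub_cancel_right, sub_eq_zero] at key
  -- now key : ∫ g x = ∫ g (x + y I)
  have hleft : (∫ x in (0:ℝ)..(2 * Real.pi), g (x : ℂ))
      = ∫ t in (0 : ℝ)..(2 * Real.pi),
          Complex.exp (-(m : ℂ) * (t : ℂ) * Complex.I) • f (t : ℂ) := rfl
  have hright : (∫ x in (0:ℝ)..(2 * Real.pi), g ((x : ℂ) + (y : ℝ) * Complex.I))
      = Complex.exp ((m : ℂ) * (y : ℂ)) •
          ∫ t in (0 : ℝ)..(2 * Real.pi),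
            Complex.exp (-(m : ℂ) * (t : ℂ) * Complex.I)
              • f ((t : ℂ) + (y : ℂ) * Complex.I) := by
    rw [← intervalIntegral.integral_smul]
    apply intervalIntegral.integral_congr
    intro x _
    simp only [hg, smul_smul, ← Complex.exp_add]
    congr 1
    rw [show (-(m : ℂ)) * ((x : ℂ) + (y : ℂ) * Complex.I) * Complex.I
        = (m : ℂ) * (y : ℂ) * (-(Complex.I * Complex.I)) + -(m : ℂ) * (x : ℂ) * Complex.I
        from by ring, Complex.I_mul_I]
    ring
  rw [← hleft, ← hright, key]
end

section
/- Let r > 0 and let f : ℂ → A be holomorphic on the strip S_r, 2π-periodic on S_r, and bounded on S_r with ‖f(z)‖ ≤ M for all z ∈ S_r. Then for every r' with 0 < r' < r and every m ∈ ℤ, the Fourier coefficients decay exponentially: ‖(1/(2π)) ∫_0^{2π} e^{-imt} • f(t) dt‖ ≤ M · e^{-|m| r'}. -/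
open MeasureTheory intervalIntegral Complex Set

/-- **Exponential decay of Fourier coefficients of periodic holomorphic functions.**
Let `A` be a complex Banach space, `r > 0`, and let `f : ℂ → A` be holomorphic on the
strip `S_r = {z : |Im z| < r}`, `2π`-periodic on `S_r`, and bounded by `M` on `S_r`.
Then for every `0 < r' < r` and every `m ∈ ℤ`,
`‖(1/(2π)) ∫_0^{2π} e^{-imt} • f(t) dt‖ ≤ M · e^{-|m| r'}`. -/
theorem norm_fourierCoeff_le_exp_decay
    {A : Type*} [NormedAddCommGroup A] [NormedSpace ℂ A] [CompleteSpace A]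
    (r : ℝ) (hr : 0 < r) (f : ℂ → A)
    (hf : DifferentiableOn ℂ f {z : ℂ | |z.im| < r})
    (hper : ∀ z : ℂ, |z.im| < r → f (z + 2 * Real.pi) = f z)
    (M : ℝ) (hM : ∀ z : ℂ, |z.im| < r → ‖f z‖ ≤ M)
    (r' : ℝ) (hr'0 : 0 < r') (hr'r : r' < r) (m : ℤ) :
    ‖(2 * (Real.pi : ℂ))⁻¹ •
        ∫ t in (0 : ℝ)..(2 * Real.pi),
          Complex.exp (-(m : ℂ) * (t : ℂ) * Complex.I) • f (t : ℂ)‖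
      ≤ M * Real.exp (-(|m| : ℝ) * r') := by
  set y : ℝ := if 0 ≤ m then -r' else r' with hy
  have hyabs : |y| = r' := by
    rcases le_or_gt 0 m with h | h
    · simp [hy, h, abs_of_pos hr'0]
    · simp [hy, not_le.mpr h, abs_of_pos hr'0]
  have hmy : (m : ℝ) * y = -(|m| : ℝ) * r' := by
    rcases le_or_gt 0 m with h | h
    · have h' : (0:ℝ) ≤ (m:ℝ) := by exact_mod_cast h
      simp only [hy, if_pos h]
      rw [_root_.abs_of_nonneg h']; ring
    · have h' : (m:ℝ) < 0 := by exact_mod_cast h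
      simp only [hy, if_neg (not_le.mpr h)]
      rw [abs_of_neg h']; ring
  have hylb : -r' ≤ y := neg_le_of_abs_le hyabs.le
  have hyub : y ≤ r' := le_of_abs_le hyabs.le
  have habs : ∀ t : ℝ, 0 ⊓ y ≤ t → t ≤ 0 ⊔ y → |t| ≤ r' := fun t h1 h2 =>
    abs_le.mpr ⟨le_trans (le_inf (by linarith) hylb) h1,
      le_trans h2 (sup_le (by linarith) hyub)⟩
  set g : ℂ → A := fun z => Complex.exp (-(m : ℂ) * z * Complex.I) • f z with hg
  have hgdiff : DifferentiableOn ℂ g {z : ℂ | |z.im| < r} := by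
    apply DifferentiableOn.smul _ hf
    exact (Complex.differentiable_exp.comp (by fun_prop)).differentiableOn
  have hgper : ∀ z : ℂ, |z.im| < r → g (z + 2 * Real.pi) = g z := by
    intro z hz
    have h1 : Complex.exp (-(m : ℂ) * (z + 2 * Real.pi) * Complex.I)
        = Complex.exp (-(m : ℂ) * z * Complex.I) := by
      have : -(m : ℂ) * (z + 2 * Real.pi) * Complex.I
          = -(m : ℂ) * z * Complex.I + ((-m : ℤ) : ℂ) * (2 * Real.pi * Complex.I) := by
        push_cast; ring
      rw [this, Complex.exp_add, Complex.exp_int_mul_two_pi_mul_I, mul_one]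
    simp only [hg, h1, hper z hz]
  -- shift the contour
  have hrect := Complex.integral_boundary_rect_eq_zero_of_differentiableOn g 0
      (2 * Real.pi + y * Complex.I) ?_
  · have hre : (2 * (Real.pi : ℂ) + y * Complex.I).re = 2 * Real.pi := by simp
    have him : (2 * (Real.pi : ℂ) + y * Complex.I).im = y := by simp
    rw [hre, him] at hrect
    simp only [Complex.zero_re, Complex.zero_im, Complex.ofReal_zero, zero_mul, add_zero] at hrect
    push_cast at hrect
    -- vertical sides cancel
    have hvert : (∫ t : ℝ in (0:ℝ)..y, g (2 * (Real.pi:ℂ) + t * Complex.I))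
        = ∫ t : ℝ in (0:ℝ)..y, g (0 + t * Complex.I) := by
      apply intervalIntegral.integral_congr
      intro t ht
      have ht' : |t| < r := lt_of_le_of_lt (habs t ht.1 ht.2) hr'r
      show g (2 * (Real.pi:ℂ) + t * Complex.I) = g (0 + t * Complex.I)
      have e : 2 * (Real.pi:ℂ) + t * Complex.I = (0 + t * Complex.I) + 2 * Real.pi := by ring
      rw [e, hgper]
      simpa using ht'
    rw [hvert, add_sub_cancel_right, sub_eq_zero] at hrect
    have hkey : (∫ t in (0 : ℝ)..(2 * Real.pi),
          Complex.exp (-(m : ℂ) * (t : ℂ) * Complex.I) • f (t : ℂ))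
        = ∫ x : ℝ in (0:ℝ)..(2 * Real.pi), g (x + y * Complex.I) := by
      rw [← hrect]
    rw [hkey]
    have hbound : ∀ x ∈ Set.uIoc (0:ℝ) (2 * Real.pi),
        ‖g (x + y * Complex.I)‖ ≤ M * Real.exp (-(|m| : ℝ) * r') := by
      intro x _
      have him2 : ((x : ℂ) + y * Complex.I).im = y := by simp
      have hmem : |((x : ℂ) + y * Complex.I).im| < r := by
        rw [him2]; exact lt_of_le_of_lt (le_of_eq hyabs) hr'r
      have hnexp : ‖Complex.exp (-(m : ℂ) * ((x : ℂ) + y * Complex.I) * Complex.I)‖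
          = Real.exp (-(|m| : ℝ) * r') := by
        rw [Complex.norm_exp, ← hmy]
        congr 1
        simp [Complex.mul_re, Complex.mul_im, Complex.add_re, Complex.add_im]
      rw [hg]
      simp only [norm_smul, hnexp]
      rw [mul_comm]
      exact mul_le_mul_of_nonneg_right (hM _ hmem) (Real.exp_nonneg _)
    have hle := intervalIntegral.norm_integral_le_of_norm_le_const hbound
    have h2pi : |2 * Real.pi - 0| = 2 * Real.pi := by
      rw [sub_zero]; exact abs_of_pos (by positivity)
    rw [h2pi] at hle
    rw [norm_smul]
    have hninv : ‖(2 * (Real.pi : ℂ))⁻¹‖ = (2 * Real.pi)⁻¹ := by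
      rw [norm_inv]
      norm_cast
      simp [abs_of_pos Real.pi_pos]
    rw [hninv]
    calc (2 * Real.pi)⁻¹ * ‖∫ x : ℝ in (0:ℝ)..(2 * Real.pi), g (x + y * Complex.I)‖
        ≤ (2 * Real.pi)⁻¹ * (M * Real.exp (-(|m| : ℝ) * r') * (2 * Real.pi)) := by
          apply mul_le_mul_of_nonneg_left hle (by positivity)
      _ = M * Real.exp (-(|m| : ℝ) * r') := by
          have hπ : (2 * Real.pi) ≠ 0 := by positivity
          field_simp
  · apply hgdiff.mono
    intro z hz
    obtain ⟨hz1, hz2⟩ := hz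
    simp only [Complex.zero_re, Complex.zero_im, mem_preimage] at hz1 hz2
    have him : (2 * (Real.pi : ℂ) + y * Complex.I).im = y := by simp
    rw [him] at hz2
    exact lt_of_le_of_lt (habs z.im hz2.1 hz2.2) hr'r
end

section
/- Suppose a ∈ A is a smooth vector for α, i.e., the orbit map t ↦ α(t)(a) is of class C^∞. Then the family of Fourier projections (P_m(a))_{m ∈ ℤ} is unconditionally summable in A with sum a: Σ_{m ∈ ℤ} P_m(a) = a. -/
open MeasureTheory intervalIntegral

lemma aux_exp_deriv (m : ℤ) (t : ℝ) :
    HasDerivAt (fun s : ℝ => Complex.exp (-(m : ℂ) * (s : ℂ) * Complex.I))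
      ((-(m : ℂ) * Complex.I) * Complex.exp (-(m : ℂ) * (t : ℂ) * Complex.I)) t := by
  have h : ∀ s : ℝ, -(m : ℂ) * (s : ℂ) * Complex.I = (-(m : ℂ) * Complex.I) * (s : ℂ) := by
    intro s; ring
  simp_rw [h]
  simpa [mul_comm] using
    (((hasDerivAt_id ((t : ℂ))).const_mul (-(m : ℂ) * Complex.I)).cexp).comp_ofReal

lemma aux_exp_norm (m : ℤ) (t : ℝ) : ‖Complex.exp (-(m : ℂ) * (t : ℂ) * Complex.I)‖ = 1 := by
  have : -(m : ℂ) * (t : ℂ) * Complex.I = ((-(m : ℝ) * t : ℝ) : ℂ) * Complex.I := by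
    push_cast; ring
  rw [this]
  exact Complex.norm_exp_ofReal_mul_I _

lemma aux_exp_cont (m : ℤ) :
    Continuous (fun s : ℝ => Complex.exp (-(m : ℂ) * (s : ℂ) * Complex.I)) := by
  fun_prop

lemma ibp_aux {A : Type*} [NormedAddCommGroup A] [NormedSpace ℂ A] [CompleteSpace A]
    (m : ℤ) (hm : m ≠ 0) (g g' : ℝ → A)
    (hg : ∀ t, HasDerivAt g (g' t) t) (hg'c : Continuous g')
    (hper : g (2 * Real.pi) = g 0) :
    (∫ t in (0:ℝ)..(2 * Real.pi), Complex.exp (-(m : ℂ) * (t : ℂ) * Complex.I) • g t)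
      = ((m : ℂ) * Complex.I)⁻¹ •
        ∫ t in (0:ℝ)..(2 * Real.pi), Complex.exp (-(m : ℂ) * (t : ℂ) * Complex.I) • g' t := by
  set c : ℂ := -(m : ℂ) * Complex.I with hc
  set e : ℝ → ℂ := fun s => Complex.exp (-(m : ℂ) * (s : ℂ) * Complex.I) with he
  have hgc : Continuous g := by
    have : Differentiable ℝ g := fun t => (hg t).differentiableAt
    exact this.continuous
  have hF : ∀ t : ℝ, HasDerivAt (fun s => e s • g s) (e t • g' t + (c * e t) • g t) t :=
    fun t => (aux_exp_deriv m t).smul (hg t)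
  have hint1 : IntervalIntegrable (fun t => e t • g' t) volume 0 (2 * Real.pi) :=
    ((aux_exp_cont m).smul hg'c).intervalIntegrable _ _
  have hint2 : IntervalIntegrable (fun t => (c * e t) • g t) volume 0 (2 * Real.pi) :=
    ((continuous_const.mul (aux_exp_cont m)).smul hgc).intervalIntegrable _ _
  have key : (∫ t in (0:ℝ)..(2 * Real.pi), (e t • g' t + (c * e t) • g t))
      = e (2 * Real.pi) • g (2 * Real.pi) - e 0 • g 0 :=
    integral_eq_sub_of_hasDerivAt (fun t _ => hF t) (hint1.add hint2)
  have he2pi : e (2 * Real.pi) = 1 := by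
    have : -(m : ℂ) * ((2 * Real.pi : ℝ) : ℂ) * Complex.I
        = ((-m : ℤ) : ℂ) * (2 * (Real.pi : ℂ) * Complex.I) := by push_cast; ring
    rw [he]; simp only [this]
    exact Complex.exp_int_mul_two_pi_mul_I (-m)
  have he0 : e 0 = 1 := by simp [he]
  rw [intervalIntegral.integral_add hint1 hint2, he2pi, he0, one_smul, one_smul, hper,
    sub_self] at key
  have hsmul : (∫ t in (0:ℝ)..(2 * Real.pi), (c * e t) • g t)
      = c • ∫ t in (0:ℝ)..(2 * Real.pi), e t • g t := by
    rw [← intervalIntegral.integral_smul]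
    congr 1; funext t; rw [smul_smul]
  rw [hsmul] at key
  have hc0 : c ≠ 0 := by
    simp only [hc, neg_mul, neg_ne_zero, mul_ne_zero_iff]
    exact ⟨by exact_mod_cast hm, Complex.I_ne_zero⟩
  have : (∫ t in (0:ℝ)..(2 * Real.pi), e t • g t)
      = (-c)⁻¹ • ∫ t in (0:ℝ)..(2 * Real.pi), e t • g' t := by
    rw [eq_inv_smul_iff₀ (neg_ne_zero.mpr hc0), neg_smul]
    exact neg_eq_of_add_eq_zero_right (by rw [add_comm]; exact key)
  rw [this]; congr 1; rw [hc]; ring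

/-- **Fourier decomposition of smooth vectors.**  Let `α` be a strongly continuous
`2π`-periodic one-parameter group of operators on a complex Banach space `A` and let
`a ∈ A` be a smooth vector for `α`, i.e. `t ↦ α(t)(a)` is `C^∞`.  Then the family of
Fourier projections `(P_m(a))_{m ∈ ℤ}` is unconditionally summable with sum `a`:
`Σ_{m ∈ ℤ} P_m(a) = a`. -/
theorem hasSum_fourierProj_of_smooth_vector
    {A : Type*} [NormedAddCommGroup A] [NormedSpace ℂ A] [CompleteSpace A]
    (α : ℝ → (A →L[ℂ] A))
    (h0 : α 0 = ContinuousLinearMap.id ℂ A)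
    (hadd : ∀ s t : ℝ, α (s + t) = (α s).comp (α t))
    (hper : ∀ t : ℝ, α (t + 2 * Real.pi) = α t)
    (hcont : ∀ b : A, Continuous fun t : ℝ => (α t) b)
    (a : A) (ha : ContDiff ℝ (⊤ : ℕ∞) fun t : ℝ => (α t) a) :
    HasSum (fun m : ℤ => fourierProj α m a) a := by
  haveI : Fact (0 < 2 * Real.pi) := ⟨by positivity⟩
  set f : ℝ → A := fun t => (α t) a with hfdef
  have hfper : ∀ t, f (t + 2 * Real.pi) = f t := fun t => by simp only [hfdef, hper t]
  have hfd : Differentiable ℝ f := ha.differentiable (by simp)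
  have hfc : Continuous f := hfd.continuous
  have hf1smooth : ContDiff ℝ (⊤ : ℕ∞) (deriv f) := (contDiff_infty_iff_deriv.mp ha).2
  have hf1d : Differentiable ℝ (deriv f) := hf1smooth.differentiable (by simp)
  have hf1c : Continuous (deriv f) := hf1d.continuous
  have hf2c : Continuous (deriv (deriv f)) := (contDiff_infty_iff_deriv.mp hf1smooth).2.continuous
  have hf1per : ∀ t, deriv f (t + 2 * Real.pi) = deriv f t := by
    intro t
    have h1 : (fun x => f (x + 2 * Real.pi)) = f := funext hfper
    rw [← deriv_comp_add_const, h1]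
  have hkey : ∀ m : ℤ, m ≠ 0 →
      fourierProj α m a = (2 * (Real.pi : ℂ))⁻¹ • (((m : ℂ) * Complex.I)⁻¹ •
        (((m : ℂ) * Complex.I)⁻¹ •
          ∫ t in (0:ℝ)..(2 * Real.pi),
            Complex.exp (-(m : ℂ) * (t : ℂ) * Complex.I) • deriv (deriv f) t)) := by
    intro m hm
    rw [fourierProj,
      ibp_aux m hm f (deriv f) (fun t => (hfd t).hasDerivAt) hf1c (by simpa using hfper 0),
      ibp_aux m hm (deriv f) (deriv (deriv f)) (fun t => (hf1d t).hasDerivAt) hf2c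
        (by simpa using hf1per 0)]
  obtain ⟨M, hM⟩ := (isCompact_Icc (a := (0:ℝ)) (b := 2 * Real.pi)).exists_bound_of_continuousOn
    hf2c.continuousOn
  set C : ℝ := max M 0 with hC
  have hC0 : 0 ≤ C := le_max_right _ _
  have hJbound : ∀ m : ℤ, ‖∫ t in (0:ℝ)..(2 * Real.pi),
      Complex.exp (-(m : ℂ) * (t : ℂ) * Complex.I) • deriv (deriv f) t‖ ≤ C * (2 * Real.pi) := by
    intro m
    have h := intervalIntegral.norm_integral_le_of_norm_le_const (C := C)
      (f := fun t : ℝ => Complex.exp (-(m : ℂ) * (t : ℂ) * Complex.I) • deriv (deriv f) t)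
      (a := 0) (b := 2 * Real.pi) ?_
    · calc ‖_‖ ≤ C * |2 * Real.pi - 0| := h
        _ = C * (2 * Real.pi) := by rw [sub_zero, abs_of_pos Real.two_pi_pos]
    · intro x hx
      rw [Set.uIoc_of_le Real.two_pi_pos.le] at hx
      rw [norm_smul, aux_exp_norm m x, one_mul]
      exact (hM x (Set.Ioc_subset_Icc_self hx)).trans (le_max_left _ _)
  have hbound : ∀ m : ℤ, m ≠ 0 → ‖fourierProj α m a‖ ≤ C * (1 / (m : ℝ) ^ 2) := by
    intro m hm
    have hm' : ((m : ℝ)) ≠ 0 := Int.cast_ne_zero.mpr hm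
    rw [hkey m hm, norm_smul, norm_smul, norm_smul]
    have h1 : ‖(2 * (Real.pi : ℂ))⁻¹‖ = (2 * Real.pi)⁻¹ := by
      rw [norm_inv]
      congr 1
      rw [show (2 * (Real.pi : ℂ)) = ((2 * Real.pi : ℝ) : ℂ) by push_cast; ring,
        Complex.norm_real, Real.norm_of_nonneg Real.two_pi_pos.le]
    have h2 : ‖((m : ℂ) * Complex.I)⁻¹‖ = |(m : ℝ)|⁻¹ := by
      rw [norm_inv, norm_mul, Complex.norm_I, mul_one]
      congr 1
      rw [show ((m : ℂ)) = (((m : ℝ) : ℂ)) by push_cast; ring, Complex.norm_real, Real.norm_eq_abs]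
    rw [h1, h2]
    calc (2 * Real.pi)⁻¹ * (|(m : ℝ)|⁻¹ * (|(m : ℝ)|⁻¹ * ‖_‖))
        ≤ (2 * Real.pi)⁻¹ * (|(m : ℝ)|⁻¹ * (|(m : ℝ)|⁻¹ * (C * (2 * Real.pi)))) := by
          gcongr
          · exact hJbound m
      _ = C * (1 / (m : ℝ) ^ 2) := by
          rw [show |(m : ℝ)|⁻¹ * (|(m : ℝ)|⁻¹ * (C * (2 * Real.pi)))
              = (|(m : ℝ)| * |(m : ℝ)|)⁻¹ * (C * (2 * Real.pi)) by rw [mul_inv]; ring,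
            ← abs_mul, ← sq, abs_sq]
          field_simp
  have hsummable : Summable (fun m : ℤ => fourierProj α m a) := by
    apply Summable.of_norm_bounded_eventually (g := fun m : ℤ => C * (1 / (m : ℝ) ^ 2))
      (((Real.summable_one_div_int_pow (p := 2)).mpr one_lt_two).mul_left _)
    rw [Filter.eventually_cofinite]
    refine Set.Finite.subset (Set.finite_singleton 0) ?_
    intro m hmem
    by_contra h
    exact hmem (hbound m h)
  have hb := hsummable.hasSum
  suffices hba : (∑' m : ℤ, fourierProj α m a) = a by rwa [hba] at hb
  rw [NormedSpace.eq_iff_forall_dual_eq ℂ]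
  intro φ
  have hgper : Function.Periodic (fun t : ℝ => φ (f t)) (2 * Real.pi) := fun t => by
    simp only [hfper t]
  have hGcont : Continuous hgper.lift := by
    exact Continuous.quotient_liftOn' (φ.continuous.comp hfc) _
  set G : C(AddCircle (2 * Real.pi), ℂ) := ⟨hgper.lift, hGcont⟩ with hG
  have hGcoe : ∀ x : ℝ, G ((x : ℝ) : AddCircle (2 * Real.pi)) = φ (f x) := fun x =>
    hgper.lift_coe x
  have hGcoeff : ∀ n : ℤ, fourierCoeff (⇑G) n = φ (fourierProj α n a) := by
    intro n
    rw [fourierCoeff_eq_intervalIntegral (⇑G) n 0, zero_add]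
    have hint : IntervalIntegrable
        (fun t : ℝ => Complex.exp (-(n : ℂ) * (t : ℂ) * Complex.I) • f t)
        volume 0 (2 * Real.pi) := ((aux_exp_cont n).smul hfc).intervalIntegrable _ _
    have hcongr : Set.EqOn (fun x : ℝ => fourier (-n) ((x : ℝ) : AddCircle (2 * Real.pi)) • G x)
        (fun x : ℝ => φ (Complex.exp (-(n : ℂ) * (x : ℂ) * Complex.I) • f x))
        (Set.uIcc 0 (2 * Real.pi)) := by
      intro x _
      simp only
      rw [_root_.map_smul, hGcoe x]
      congr 1
      rw [fourier_coe_apply]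
      congr 1
      have hπ : (Real.pi : ℂ) ≠ 0 := Complex.ofReal_ne_zero.mpr Real.pi_ne_zero
      push_cast
      field_simp
    rw [fourierProj, _root_.map_smul, ← φ.intervalIntegral_comp_comm hint,
      intervalIntegral.integral_congr hcongr]
    rw [Complex.real_smul, smul_eq_mul]
    congr 1
    push_cast
    rw [one_div]
  have hφsum : HasSum (fun n : ℤ => φ (fourierProj α n a)) (φ (∑' m : ℤ, fourierProj α m a)) :=
    φ.hasSum hb
  have hGsummable : Summable (fourierCoeff (⇑G)) := by
    rw [show fourierCoeff (⇑G) = fun n : ℤ => φ (fourierProj α n a) from funext hGcoeff]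
    exact hφsum.summable
  have hps := has_pointwise_sum_fourier_series_of_summable hGsummable (0 : AddCircle (2 * Real.pi))
  simp only [fourier_eval_zero, smul_eq_mul, mul_one] at hps
  have hG0 : G (0 : AddCircle (2 * Real.pi)) = φ a := by
    rw [show (0 : AddCircle (2 * Real.pi)) = (((0 : ℝ)) : AddCircle (2 * Real.pi)) by norm_cast,
      hGcoe 0]
    simp [hfdef, h0]
  rw [hG0, show (fun i : ℤ => fourierCoeff (⇑G) i) = fun n : ℤ => φ (fourierProj α n a)
    from funext hGcoeff] at hps
  exact hφsum.unique hps
end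

section
/- Let A be a ring with an internal ℤ-grading 𝒜 : ℤ → AddSubgroup A (so A is the internal direct sum of the 𝒜_m and 𝒜_m · 𝒜_n ⊆ 𝒜_{m+n}), and suppose the degree-zero component is commutative: a·b = b·a for all a, b ∈ 𝒜₀. For x ∈ A write x₀ for the degree-zero homogeneous component of x. Suppose x₁, x₂ ∈ A have all their homogeneous components of negative degree equal to zero, y₁, y₂ ∈ A have all their homogeneous components of positive degree equal to zero, and (x₁)₀ + (y₁)₀ = 0 and (x₂)₀ + (y₂)₀ = 0. Then the commutator x₁x₂ − x₂x₁ has all components of negative degree equal to zero, the commutator y₁y₂ − y₂y₁ has all components of positive degree equal to zero, and (x₁x₂ − x₂x₁)₀ + (y₁y₂ − y₂y₁)₀ = 0. Consequently the set p₂ := {(x,y) : x has no negative components, y has no positive components, x₀ + y₀ = 0} is closed under the componentwise commutator bracket on A × A. -/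
/-- The degree-`m` homogeneous component of an element of an internally `ℤ`-graded
ring. -/
noncomputable def homComponent {A : Type*} [Ring A] (𝒜 : ℤ → AddSubgroup A)
    [GradedRing 𝒜] (x : A) (m : ℤ) : A :=
  (DirectSum.decompose 𝒜 x m : A)

/-- Membership in the subalgebra `p₂`: the first component has no homogeneous
components of negative degree, the second has none of positive degree, and their
degree-zero components are opposite. -/
def memP2 {A : Type*} [Ring A] (𝒜 : ℤ → AddSubgroup A) [GradedRing 𝒜]
    (p : A × A) : Prop :=
  (∀ m : ℤ, m < 0 → homComponent 𝒜 p.1 m = 0) ∧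
    (∀ m : ℤ, 0 < m → homComponent 𝒜 p.2 m = 0) ∧
    homComponent 𝒜 p.1 0 + homComponent 𝒜 p.2 0 = 0

lemma homComponent_sub {A : Type*} [Ring A] (𝒜 : ℤ → AddSubgroup A) [GradedRing 𝒜]
    (x y : A) (m : ℤ) :
    homComponent 𝒜 (x - y) m = homComponent 𝒜 x m - homComponent 𝒜 y m := by
  simp [homComponent, DirectSum.decompose_sub]

lemma homComponent_mem {A : Type*} [Ring A] (𝒜 : ℤ → AddSubgroup A) [GradedRing 𝒜]
    (x : A) (m : ℤ) : homComponent 𝒜 x m ∈ 𝒜 m :=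
  SetLike.coe_mem _

lemma aux_mul_neg {A : Type*} [Ring A] (𝒜 : ℤ → AddSubgroup A) [GradedRing 𝒜]
    (x y : A) (hx : ∀ m : ℤ, m < 0 → homComponent 𝒜 x m = 0)
    (hy : ∀ m : ℤ, m < 0 → homComponent 𝒜 y m = 0) :
    (∀ m : ℤ, m < 0 → homComponent 𝒜 (x * y) m = 0) ∧
      homComponent 𝒜 (x * y) 0 = homComponent 𝒜 x 0 * homComponent 𝒜 y 0 := by
  classical
  unfold homComponent at *
  constructor
  · intro m hm
    rw [DirectSum.decompose_mul, DirectSum.coe_mul_apply]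
    apply Finset.sum_eq_zero
    rintro ⟨i, j⟩ hij
    simp only [Finset.mem_filter, Finset.mem_product] at hij
    rcases lt_or_ge i 0 with h | h
    · rw [hx i h, zero_mul]
    · have hj : j < 0 := by omega
      rw [hy j hj, mul_zero]
  · rw [DirectSum.decompose_mul, DirectSum.coe_mul_apply]
    refine Finset.sum_eq_single ((0 : ℤ), (0 : ℤ)) ?_ ?_
    · rintro ⟨i, j⟩ hij hne
      simp only [Finset.mem_filter, Finset.mem_product] at hij
      rcases lt_trichotomy i 0 with h | h | h
      · rw [hx i h, zero_mul]
      · exact absurd (by simp [Prod.ext_iff, h]; omega : ((i, j) : ℤ × ℤ) = (0, 0)) hne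
      · have hj : j < 0 := by omega
        rw [hy j hj, mul_zero]
    · intro h
      have h0 : DirectSum.decompose 𝒜 x 0 = 0 ∨ DirectSum.decompose 𝒜 y 0 = 0 := by
        by_contra hc'
        push_neg at hc'
        exact h (by simp [Finset.mem_filter, Finset.mem_product,
          DFinsupp.mem_support_toFun, hc'.1, hc'.2])
      rcases h0 with h0 | h0 <;> simp [h0]

lemma aux_mul_pos {A : Type*} [Ring A] (𝒜 : ℤ → AddSubgroup A) [GradedRing 𝒜]
    (x y : A) (hx : ∀ m : ℤ, 0 < m → homComponent 𝒜 x m = 0)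
    (hy : ∀ m : ℤ, 0 < m → homComponent 𝒜 y m = 0) :
    (∀ m : ℤ, 0 < m → homComponent 𝒜 (x * y) m = 0) ∧
      homComponent 𝒜 (x * y) 0 = homComponent 𝒜 x 0 * homComponent 𝒜 y 0 := by
  classical
  unfold homComponent at *
  constructor
  · intro m hm
    rw [DirectSum.decompose_mul, DirectSum.coe_mul_apply]
    apply Finset.sum_eq_zero
    rintro ⟨i, j⟩ hij
    simp only [Finset.mem_filter, Finset.mem_product] at hij
    rcases lt_or_ge 0 i with h | h
    · rw [hx i h, zero_mul]
    · have hj : 0 < j := by omega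
      rw [hy j hj, mul_zero]
  · rw [DirectSum.decompose_mul, DirectSum.coe_mul_apply]
    refine Finset.sum_eq_single ((0 : ℤ), (0 : ℤ)) ?_ ?_
    · rintro ⟨i, j⟩ hij hne
      simp only [Finset.mem_filter, Finset.mem_product] at hij
      rcases lt_trichotomy 0 i with h | h | h
      · rw [hx i h, zero_mul]
      · exact absurd (by simp [Prod.ext_iff, ← h]; omega : ((i, j) : ℤ × ℤ) = (0, 0)) hne
      · have hj : 0 < j := by omega
        rw [hy j hj, mul_zero]
    · intro h
      have h0 : DirectSum.decompose 𝒜 x 0 = 0 ∨ DirectSum.decompose 𝒜 y 0 = 0 := by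
        by_contra hc'
        push_neg at hc'
        exact h (by simp [Finset.mem_filter, Finset.mem_product,
          DFinsupp.mem_support_toFun, hc'.1, hc'.2])
      rcases h0 with h0 | h0 <;> simp [h0]

lemma p2_core {A : Type*} [Ring A] (𝒜 : ℤ → AddSubgroup A) [GradedRing 𝒜]
    (hcomm : ∀ a b : A, a ∈ 𝒜 0 → b ∈ 𝒜 0 → a * b = b * a)
    (x₁ x₂ y₁ y₂ : A)
    (hx₁ : ∀ m : ℤ, m < 0 → homComponent 𝒜 x₁ m = 0)
    (hx₂ : ∀ m : ℤ, m < 0 → homComponent 𝒜 x₂ m = 0)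
    (hy₁ : ∀ m : ℤ, 0 < m → homComponent 𝒜 y₁ m = 0)
    (hy₂ : ∀ m : ℤ, 0 < m → homComponent 𝒜 y₂ m = 0) :
    (∀ m : ℤ, m < 0 → homComponent 𝒜 (x₁ * x₂ - x₂ * x₁) m = 0) ∧
      (∀ m : ℤ, 0 < m → homComponent 𝒜 (y₁ * y₂ - y₂ * y₁) m = 0) ∧
      homComponent 𝒜 (x₁ * x₂ - x₂ * x₁) 0 + homComponent 𝒜 (y₁ * y₂ - y₂ * y₁) 0 = 0 := by
  refine ⟨?_, ?_, ?_⟩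
  · intro m hm
    rw [homComponent_sub, (aux_mul_neg 𝒜 x₁ x₂ hx₁ hx₂).1 m hm,
      (aux_mul_neg 𝒜 x₂ x₁ hx₂ hx₁).1 m hm, sub_zero]
  · intro m hm
    rw [homComponent_sub, (aux_mul_pos 𝒜 y₁ y₂ hy₁ hy₂).1 m hm,
      (aux_mul_pos 𝒜 y₂ y₁ hy₂ hy₁).1 m hm, sub_zero]
  · rw [homComponent_sub, homComponent_sub, (aux_mul_neg 𝒜 x₁ x₂ hx₁ hx₂).2,
      (aux_mul_neg 𝒜 x₂ x₁ hx₂ hx₁).2, (aux_mul_pos 𝒜 y₁ y₂ hy₁ hy₂).2,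
      (aux_mul_pos 𝒜 y₂ y₁ hy₂ hy₁).2,
      hcomm _ _ (homComponent_mem 𝒜 x₁ 0) (homComponent_mem 𝒜 x₂ 0),
      hcomm _ _ (homComponent_mem 𝒜 y₁ 0) (homComponent_mem 𝒜 y₂ 0)]
    simp

/-- Let `A` be a ring with an internal `ℤ`-grading `𝒜` whose degree-zero component is
commutative.  If `x₁, x₂` have no homogeneous components of negative degree, `y₁, y₂`
have none of positive degree, and `(x₁)₀ + (y₁)₀ = 0`, `(x₂)₀ + (y₂)₀ = 0`, then the
commutator `x₁x₂ − x₂x₁` has no components of negative degree, `y₁y₂ − y₂y₁` has none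
of positive degree, and `(x₁x₂ − x₂x₁)₀ + (y₁y₂ − y₂y₁)₀ = 0`.  Consequently the set
`p₂` is closed under the componentwise commutator bracket on `A × A`. -/
theorem commutator_closed_in_p2
    {A : Type*} [Ring A] (𝒜 : ℤ → AddSubgroup A) [GradedRing 𝒜]
    (hcomm : ∀ a b : A, a ∈ 𝒜 0 → b ∈ 𝒜 0 → a * b = b * a)
    (x₁ x₂ y₁ y₂ : A)
    (hx₁ : ∀ m : ℤ, m < 0 → homComponent 𝒜 x₁ m = 0)
    (hx₂ : ∀ m : ℤ, m < 0 → homComponent 𝒜 x₂ m = 0)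
    (hy₁ : ∀ m : ℤ, 0 < m → homComponent 𝒜 y₁ m = 0)
    (hy₂ : ∀ m : ℤ, 0 < m → homComponent 𝒜 y₂ m = 0)
    (h₁ : homComponent 𝒜 x₁ 0 + homComponent 𝒜 y₁ 0 = 0)
    (h₂ : homComponent 𝒜 x₂ 0 + homComponent 𝒜 y₂ 0 = 0) :
    ((∀ m : ℤ, m < 0 → homComponent 𝒜 (x₁ * x₂ - x₂ * x₁) m = 0) ∧
      (∀ m : ℤ, 0 < m → homComponent 𝒜 (y₁ * y₂ - y₂ * y₁) m = 0) ∧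
      homComponent 𝒜 (x₁ * x₂ - x₂ * x₁) 0 + homComponent 𝒜 (y₁ * y₂ - y₂ * y₁) 0 = 0) ∧
    ∀ p q : A × A, memP2 𝒜 p → memP2 𝒜 q →
      memP2 𝒜 (p.1 * q.1 - q.1 * p.1, p.2 * q.2 - q.2 * p.2) := by
  refine ⟨p2_core 𝒜 hcomm x₁ x₂ y₁ y₂ hx₁ hx₂ hy₁ hy₂, ?_⟩
  rintro p q ⟨hp1, hp2, hp3⟩ ⟨hq1, hq2, hq3⟩
  exact p2_core 𝒜 hcomm p.1 q.1 p.2 q.2 hp1 hq1 hp2 hq2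
end

section
/- For all real numbers r, R with 0 < r < R < 1, the family indexed by n ∈ ℤ given by √( (∫_{1−r}^{1+r} s^{2n+1} ds) / (∫_{1−R}^{1+R} s^{2n+1} ds) ) is summable; here s^{2n+1} denotes the integer (zpow) power of s, which is well defined and positive since the integration variable s ranges over positive reals, so both integrals are positive. (These quotients are the squares of the singular values of the restriction operator between the Bergman spaces of the annuli {1−R < |z| < 1+R} and {1−r < |z| < 1+r}, and their square-summability shows that this restriction operator is trace class.) -/
open MeasureTheory intervalIntegral

private lemma zpow_le_left_of_nonneg {x y : ℝ} {m : ℤ} (hx : 0 < x) (hxy : x ≤ y)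
    (hm : 0 ≤ m) : x ^ m ≤ y ^ m := by
  obtain ⟨k, rfl⟩ := Int.eq_ofNat_of_zero_le hm
  rw [zpow_natCast, zpow_natCast]
  exact pow_le_pow_left₀ hx.le hxy k

private lemma zpow_le_left_of_nonpos {x y : ℝ} {m : ℤ} (hx : 0 < x) (hxy : x ≤ y)
    (hm : m ≤ 0) : y ^ m ≤ x ^ m := by
  obtain ⟨k, rfl⟩ := Int.exists_eq_neg_ofNat hm
  rw [zpow_neg, zpow_neg, zpow_natCast, zpow_natCast]
  rw [inv_le_inv₀ (pow_pos (hx.trans_le hxy) k) (pow_pos hx k)]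
  exact pow_le_pow_left₀ hx.le hxy k

private lemma zpow_intervalIntegrable {a b : ℝ} (ha : 0 < a) (hab : a ≤ b) (m : ℤ) :
    IntervalIntegrable (fun s : ℝ => s ^ m) volume a b := by
  refine intervalIntegrable_zpow (Or.inr ?_)
  rw [Set.uIcc_of_le hab]
  intro h
  exact absurd h.1 (by linarith)

private lemma int_upper {a b M : ℝ} {m : ℤ} (ha : 0 < a) (hab : a ≤ b)
    (hM : ∀ s ∈ Set.Icc a b, s ^ m ≤ M) :
    (∫ s in a..b, s ^ m) ≤ (b - a) * M := by
  calc (∫ s in a..b, s ^ m) ≤ ∫ _ in a..b, M :=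
        integral_mono_on hab (zpow_intervalIntegrable ha hab m) intervalIntegrable_const hM
    _ = (b - a) * M := by simp [smul_eq_mul]

private lemma int_lower {a b u v L : ℝ} {m : ℤ} (ha : 0 < a) (hau : a ≤ u) (huv : u ≤ v)
    (hvb : v ≤ b) (hL : ∀ s ∈ Set.Icc u v, L ≤ s ^ m) :
    (v - u) * L ≤ ∫ s in a..b, s ^ m := by
  have hu : 0 < u := ha.trans_le hau
  have hv : 0 < v := hu.trans_le huv
  have h1 : (∫ s in a..b, s ^ m)
      = (∫ s in a..u, s ^ m) + (∫ s in u..v, s ^ m) + (∫ s in v..b, s ^ m) := by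
    rw [integral_add_adjacent_intervals (zpow_intervalIntegrable ha hau m)
        (zpow_intervalIntegrable hu huv m),
      integral_add_adjacent_intervals (zpow_intervalIntegrable ha (hau.trans huv) m)
        (zpow_intervalIntegrable hv hvb m)]
  have h2 : (0:ℝ) ≤ ∫ s in a..u, s ^ m :=
    integral_nonneg hau (fun s hs => zpow_nonneg (by linarith [hs.1]) m)
  have h3 : (0:ℝ) ≤ ∫ s in v..b, s ^ m :=
    integral_nonneg hvb (fun s hs => zpow_nonneg (by linarith [hs.1]) m)
  have h4 : (v - u) * L ≤ ∫ s in u..v, s ^ m := by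
    calc (v - u) * L = ∫ _ in u..v, L := by simp [smul_eq_mul]
      _ ≤ ∫ s in u..v, s ^ m :=
        integral_mono_on huv intervalIntegrable_const (zpow_intervalIntegrable hu huv m) hL
  linarith

private lemma summable_aux {K q : ℝ} (hK : 0 ≤ K) (hq0 : 0 ≤ q) (hq1 : q < 1)
    {f : ℕ → ℝ} (h0 : ∀ n, 0 ≤ f n) (hle : ∀ n, f n ≤ Real.sqrt (K * (q ^ n) ^ 2)) :
    Summable f := by
  have heq : ∀ n : ℕ, Real.sqrt (K * (q ^ n) ^ 2) = Real.sqrt K * q ^ n := fun n => by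
    rw [Real.sqrt_mul hK, Real.sqrt_sq (pow_nonneg hq0 n)]
  refine Summable.of_nonneg_of_le h0 (fun n => (hle n).trans_eq (heq n)) ?_
  exact (summable_geometric_of_lt_one hq0 hq1).mul_left _

private lemma pow_odd_le_sq {q : ℝ} (hq0 : 0 ≤ q) (hq1 : q < 1) (n : ℕ) :
    q ^ (2 * n + 1) ≤ (q ^ n) ^ 2 := by
  have h1 : q ^ (2 * n + 1) = (q ^ n) ^ 2 * q := by ring
  rw [h1]
  calc (q ^ n) ^ 2 * q ≤ (q ^ n) ^ 2 * 1 :=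
        mul_le_mul_of_nonneg_left hq1.le (by positivity)
    _ = (q ^ n) ^ 2 := mul_one _

/-- **Square-summability of the singular values of the restriction operator between
Bergman spaces of concentric annuli.**  For all real `r, R` with `0 < r < R < 1`, the
family indexed by `n ∈ ℤ` given by
`√( (∫_{1−r}^{1+r} s^{2n+1} ds) / (∫_{1−R}^{1+R} s^{2n+1} ds) )`
is summable (the powers are integer `zpow` powers, well defined and positive on the
positive reals over which `s` ranges). -/
theorem summable_sqrt_annulus_ratio :
    ∀ r R : ℝ, 0 < r → r < R → R < 1 →
      Summable fun n : ℤ =>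
        Real.sqrt ((∫ s in (1 - r)..(1 + r), s ^ (2 * n + 1)) /
          (∫ s in (1 - R)..(1 + R), s ^ (2 * n + 1))) := by
  intro r R hr hrR hR1
  have hr1 : r < 1 := hrR.trans hR1
  have h1r : 0 < 1 - r := by linarith
  have h1R : 0 < 1 - R := by linarith
  set F : ℤ → ℝ := fun n =>
    Real.sqrt ((∫ s in (1 - r)..(1 + r), s ^ (2 * n + 1)) /
      (∫ s in (1 - R)..(1 + R), s ^ (2 * n + 1))) with hF
  have hF0 : ∀ n, 0 ≤ F n := fun n => Real.sqrt_nonneg _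
  have hK : (0:ℝ) ≤ 4 * r / (R - r) := div_nonneg (by linarith) (by linarith)
  -- positive side
  have hposS : Summable fun n : ℕ => F (n : ℤ) := by
    set c : ℝ := 1 + (r + R) / 2 with hc
    have hc0 : 0 < c := by rw [hc]; linarith
    set q : ℝ := (1 + r) / c with hq
    have hq0 : 0 ≤ q := by positivity
    have hq1 : q < 1 := by rw [hq, div_lt_one hc0, hc]; linarith
    refine summable_aux hK hq0 hq1 (fun n => hF0 _) (fun n => ?_)
    set m : ℤ := 2 * (n : ℤ) + 1 with hm
    have hm0 : (0:ℤ) ≤ m := by rw [hm]; positivity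
    have hmk : m = ((2 * n + 1 : ℕ) : ℤ) := by rw [hm]; push_cast; ring
    have hup : (∫ s in (1 - r)..(1 + r), s ^ m)
        ≤ ((1 + r) - (1 - r)) * (1 + r) ^ m :=
      int_upper h1r (by linarith) (fun s hs =>
        zpow_le_left_of_nonneg (by linarith [hs.1]) hs.2 hm0)
    have hlow : ((1 + R) - c) * c ^ m ≤ ∫ s in (1 - R)..(1 + R), s ^ m :=
      int_lower h1R (by rw [hc]; linarith) (by rw [hc]; linarith) le_rfl
        (fun s hs => zpow_le_left_of_nonneg hc0 hs.1 hm0)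
    have hBpos : 0 < ((1 + R) - c) * c ^ m :=
      mul_pos (by rw [hc]; linarith) (zpow_pos hc0 _)
    have hdiv : (∫ s in (1 - r)..(1 + r), s ^ m) / (∫ s in (1 - R)..(1 + R), s ^ m)
        ≤ (((1 + r) - (1 - r)) * (1 + r) ^ m) / (((1 + R) - c) * c ^ m) :=
      div_le_div₀ (mul_nonneg (by linarith) (zpow_nonneg (by linarith) _)) hup hBpos hlow
    have heq : (((1 + r) - (1 - r)) * (1 + r) ^ m) / (((1 + R) - c) * c ^ m)
        = (4 * r / (R - r)) * q ^ (2 * n + 1) := by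
      rw [hmk, zpow_natCast, zpow_natCast, hq, div_pow, mul_div_mul_comm]
      congr 1
      rw [hc, div_eq_div_iff (by linarith) (by linarith)]
      ring
    refine Real.sqrt_le_sqrt (hdiv.trans_eq heq |>.trans ?_)
    exact mul_le_mul_of_nonneg_left (pow_odd_le_sq hq0 hq1 n) hK
  -- negative side
  have hnegS : Summable fun n : ℕ => F (-(n : ℤ)) := by
    rw [← summable_nat_add_iff 1]
    set c : ℝ := 1 - (r + R) / 2 with hc
    have hc0 : 0 < c := by rw [hc]; linarith
    set q : ℝ := c / (1 - r) with hq
    have hq0 : 0 ≤ q := by positivity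
    have hq1 : q < 1 := by rw [hq, div_lt_one h1r, hc]; linarith
    refine summable_aux hK hq0 hq1 (fun n => hF0 _) (fun n => ?_)
    set m : ℤ := 2 * (-((n + 1 : ℕ) : ℤ)) + 1 with hm
    have hm0 : m ≤ 0 := by rw [hm]; push_cast; omega
    have hmk : m = -((2 * n + 1 : ℕ) : ℤ) := by rw [hm]; push_cast; ring
    have hup : (∫ s in (1 - r)..(1 + r), s ^ m)
        ≤ ((1 + r) - (1 - r)) * (1 - r) ^ m :=
      int_upper h1r (by linarith) (fun s hs =>
        zpow_le_left_of_nonpos h1r hs.1 hm0)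
    have hlow : (c - (1 - R)) * c ^ m ≤ ∫ s in (1 - R)..(1 + R), s ^ m :=
      int_lower h1R le_rfl (by rw [hc]; linarith) (by rw [hc]; linarith)
        (fun s hs => zpow_le_left_of_nonpos (by linarith [hs.1]) hs.2 hm0)
    have hBpos : 0 < (c - (1 - R)) * c ^ m :=
      mul_pos (by rw [hc]; linarith) (zpow_pos hc0 _)
    have hdiv : (∫ s in (1 - r)..(1 + r), s ^ m) / (∫ s in (1 - R)..(1 + R), s ^ m)
        ≤ (((1 + r) - (1 - r)) * (1 - r) ^ m) / ((c - (1 - R)) * c ^ m) :=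
      div_le_div₀ (mul_nonneg (by linarith) (zpow_nonneg (by linarith) _)) hup hBpos hlow
    have heq : (((1 + r) - (1 - r)) * (1 - r) ^ m) / ((c - (1 - R)) * c ^ m)
        = (4 * r / (R - r)) * q ^ (2 * n + 1) := by
      rw [hmk, zpow_neg, zpow_neg, zpow_natCast, zpow_natCast, hq, div_pow,
        mul_div_mul_comm, inv_div_inv]
      congr 1
      rw [hc, div_eq_div_iff (by linarith) (by linarith)]
      ring
    refine Real.sqrt_le_sqrt (hdiv.trans_eq heq |>.trans ?_)
    exact mul_le_mul_of_nonneg_left (pow_odd_le_sq hq0 hq1 n) hK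
  exact Summable.of_nat_of_neg hposS hnegS
end

section
/- Let E and F be real normed spaces, U ⊆ E open, k ∈ ℕ, and γ : U → F a map of class C^k. Let (T_j) be a sequence of continuous linear operators F → F that converges to the identity uniformly on every compact subset of F (i.e., for every compact C ⊆ F, sup_{w ∈ C} ‖T_j(w) − w‖ → 0 as j → ∞). Then T_j ∘ γ → γ in the compact-open C^k topology: for every i ≤ k, every compact K ⊆ U and every compact L ⊆ E, sup_{x ∈ K, v₁,…,v_i ∈ L} ‖(D^i(T_j ∘ γ))(x)(v₁,…,v_i) − (D^i γ)(x)(v₁,…,v_i)‖ → 0 as j → ∞. -/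
/-- **Post-composition with operators converging to the identity uniformly on compacta
is convergent in the compact-open `C^k` topology.**  Let `E, F` be real normed spaces,
`U ⊆ E` open, `k ∈ ℕ` and `γ : U → F` of class `C^k`.  Let `(T_j)` be a sequence of
continuous linear operators `F → F` converging to the identity uniformly on every
compact subset of `F`.  Then for every `i ≤ k`, every compact `K ⊆ U` and every compact
`L ⊆ E`, the `i`-th derivatives of `T_j ∘ γ` converge to those of `γ` uniformly for
base points in `K` and direction vectors in `L`. -/
theorem comp_tendsto_identity_in_compact_open_Ck
    {E F : Type*} [NormedAddCommGroup E] [NormedSpace ℝ E]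
    [NormedAddCommGroup F] [NormedSpace ℝ F]
    (U : Set E) (hU : IsOpen U) (k : ℕ) (γ : E → F)
    (hγ : ContDiffOn ℝ (k : ℕ∞) γ U)
    (T : ℕ → (F →L[ℝ] F))
    (hT : ∀ C : Set F, IsCompact C → ∀ ε > (0 : ℝ), ∃ J : ℕ, ∀ j ≥ J, ∀ w ∈ C,
      ‖T j w - w‖ < ε) :
    ∀ i : ℕ, i ≤ k → ∀ K : Set E, K ⊆ U → IsCompact K → ∀ L : Set E, IsCompact L →
      ∀ ε > (0 : ℝ), ∃ J : ℕ, ∀ j ≥ J, ∀ x ∈ K, ∀ v : Fin i → E, (∀ l, v l ∈ L) →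
        ‖iteratedFDerivWithin ℝ i (fun z => T j (γ z)) U x v
            - iteratedFDerivWithin ℝ i γ U x v‖ < ε := by
  have hs : UniqueDiffOn ℝ U := hU.uniqueDiffOn
  intro i hi K hKU hK L hL ε hε
  have hik : (i : WithTop ℕ∞) ≤ ((k : ℕ∞) : WithTop ℕ∞) := by exact_mod_cast hi
  -- continuity of the iterated derivative
  have hcont : ContinuousOn (iteratedFDerivWithin ℝ i γ U) U :=
    hγ.continuousOn_iteratedFDerivWithin hik hs
  -- the compact set of values
  set P : Set (E × (Fin i → E)) := K ×ˢ Set.univ.pi fun _ => L with hP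
  have hPc : IsCompact P := hK.prod (isCompact_univ_pi fun _ => hL)
  have hfc : ContinuousOn
      (fun p : E × (Fin i → E) => iteratedFDerivWithin ℝ i γ U p.1 p.2) P := by
    have h1 : ContinuousOn
        (fun p : E × (Fin i → E) => (iteratedFDerivWithin ℝ i γ U p.1, p.2)) P := by
      refine ContinuousOn.prodMk ?_ continuousOn_snd
      exact hcont.comp continuousOn_fst fun p hp => hKU hp.1
    exact continuous_eval.comp_continuousOn h1
  set C : Set F :=
    (fun p : E × (Fin i → E) => iteratedFDerivWithin ℝ i γ U p.1 p.2) '' P with hC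
  have hCc : IsCompact C := hPc.image_of_continuousOn hfc
  obtain ⟨J, hJ⟩ := hT C hCc ε hε
  refine ⟨J, fun j hj x hx v hv => ?_⟩
  have heq : iteratedFDerivWithin ℝ i (fun z => T j (γ z)) U x =
      (T j).compContinuousMultilinearMap (iteratedFDerivWithin ℝ i γ U x) :=
    (T j).iteratedFDerivWithin_comp_left (hγ x (hKU hx)) hs (hKU hx) hik
  rw [heq]
  exact hJ j hj _ ⟨(x, v), ⟨hx, fun l _ => hv l⟩, rfl⟩
end
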